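/- arXiv:2111.02560 — 3 statements merged into one kernel-verified Lean document; each statement's English description precedes it below -/
import Mathlib

section
/- Let N ≥ 1, let A be an N×N real matrix, let ε and φ be real numbers, and let i denote the imaginary unit. If θ : ℝ → (Fin N → ℂ) is differentiable and satisfies, for every index i₀ and every time t, θ̇_{i₀}(t) = ε ∑_{j} A_{i₀ j} (sin(θ_j(t) − θ_{i₀}(t) − φ) − i·cos(θ_j(t) − θ_{i₀}(t) − φ)) (with the complex sine and cosine), then the function x : ℝ → (Fin N → ℂ) defined by x_{i₀}(t) = exp(i·θ_{i₀}(t)) satisfies the linear system ẋ_{i₀}(t) = ε e^{−iφ} ∑_{j} A_{i₀ j} x_j(t) for all i₀ and t. -/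
/-- `sin z - i cos z = -i e^{iz}`. -/
lemma sin_sub_I_cos (z : ℂ) :
    Complex.sin z - Complex.I * Complex.cos z = -Complex.I * Complex.exp (Complex.I * z) := by
  rw [Complex.sin, Complex.cos, mul_comm z Complex.I]
  ring

/-- The complex-valued Kuramoto model: if `θ : ℝ → Fin N → ℂ` satisfies
`θ̇_i = ε ∑_j A_{ij} (sin(θ_j − θ_i − φ) − i cos(θ_j − θ_i − φ))` (complex sine/cosine),
then `x_i = exp(i θ_i)` satisfies the linear system `ẋ_i = ε e^{−iφ} ∑_j A_{ij} x_j`. -/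
theorem complex_kuramoto_linearizes
    (N : ℕ) (hN : 1 ≤ N) (A : Matrix (Fin N) (Fin N) ℝ) (ε φ : ℝ)
    (θ : ℝ → Fin N → ℂ) (hθdiff : ∀ i₀, Differentiable ℝ (fun t => θ t i₀))
    (hθ : ∀ (i₀ : Fin N) (t : ℝ),
      HasDerivAt (fun s => θ s i₀)
        ((ε : ℂ) * ∑ j : Fin N, (A i₀ j : ℂ) *
          (Complex.sin (θ t j - θ t i₀ - (φ : ℂ)) -
            Complex.I * Complex.cos (θ t j - θ t i₀ - (φ : ℂ)))) t) :
    ∀ (i₀ : Fin N) (t : ℝ),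
      HasDerivAt (fun s => Complex.exp (Complex.I * θ s i₀))
        ((ε : ℂ) * Complex.exp (-Complex.I * (φ : ℂ)) *
          ∑ j : Fin N, (A i₀ j : ℂ) * Complex.exp (Complex.I * θ t j)) t := by
  intro i₀ t
  have h := (((hθ i₀ t).const_mul Complex.I)).cexp
  convert h using 1
  simp only [sin_sub_I_cos, Finset.mul_sum]
  refine Finset.sum_congr rfl fun j _ => ?_
  have e1 : Complex.exp (Complex.I * θ t i₀) * Complex.exp (Complex.I * (θ t j - θ t i₀ - (φ:ℂ)))
      = Complex.exp (-Complex.I * (φ:ℂ)) * Complex.exp (Complex.I * θ t j) := by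
    rw [← Complex.exp_add, ← Complex.exp_add]; ring_nf
  linear_combination (-(ε:ℂ) * (A i₀ j : ℂ)) * e1 +
    ((ε:ℂ) * (A i₀ j : ℂ) * Complex.exp (Complex.I * θ t i₀) *
      Complex.exp (Complex.I * (θ t j - θ t i₀ - (φ:ℂ)))) * Complex.I_sq
end

section
/- Let N ≥ 1, A an N×N real matrix, ε, φ ∈ ℝ, and K_{ij} = ε e^{−iφ} A_{ij}. Suppose r : ℝ → (Fin N → ℝ) and ψ : ℝ → (Fin N → ℝ) are differentiable with r_i(t) > 0 for all i, t, and the function x defined by x_i(t) = r_i(t) e^{iψ_i(t)} satisfies ẋ = K x. Then for all i and t: ψ̇_i(t) = ε ∑_j A_{ij} (r_j(t)/r_i(t)) sin(ψ_j(t) − ψ_i(t) − φ) and ṙ_i(t) = ε ∑_j A_{ij} r_j(t) cos(ψ_j(t) − ψ_i(t) − φ). -/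
/-- Polar form: if `x_i(t) = r_i(t) e^{iψ_i(t)}` with `r_i > 0` solves `ẋ = K x` with
`K = ε e^{−iφ} A`, then the arguments obey the modulus-weighted Kuramoto model
`ψ̇_i = ε ∑_j A_{ij} (r_j/r_i) sin(ψ_j − ψ_i − φ)` and the moduli obey
`ṙ_i = ε ∑_j A_{ij} r_j cos(ψ_j − ψ_i − φ)`. -/
theorem polar_form_kuramoto
    (N : ℕ) (hN : 1 ≤ N) (A : Matrix (Fin N) (Fin N) ℝ) (ε φ : ℝ)
    (K : Matrix (Fin N) (Fin N) ℂ)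
    (hK : ∀ i j, K i j = (ε : ℂ) * Complex.exp (-Complex.I * (φ : ℂ)) * (A i j : ℂ))
    (r ψ : ℝ → Fin N → ℝ)
    (hrdiff : ∀ i, Differentiable ℝ (fun t => r t i))
    (hψdiff : ∀ i, Differentiable ℝ (fun t => ψ t i))
    (hrpos : ∀ (i : Fin N) (t : ℝ), 0 < r t i)
    (hx : ∀ (i : Fin N) (t : ℝ),
      HasDerivAt (fun s => (r s i : ℂ) * Complex.exp (Complex.I * (ψ s i : ℂ)))
        (K.mulVec (fun j => (r t j : ℂ) * Complex.exp (Complex.I * (ψ t j : ℂ))) i) t) :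
    (∀ (i : Fin N) (t : ℝ),
      HasDerivAt (fun s => ψ s i)
        (ε * ∑ j : Fin N, A i j * (r t j / r t i) * Real.sin (ψ t j - ψ t i - φ)) t) ∧
    (∀ (i : Fin N) (t : ℝ),
      HasDerivAt (fun s => r s i)
        (ε * ∑ j : Fin N, A i j * r t j * Real.cos (ψ t j - ψ t i - φ)) t) := by
  have main : ∀ (i : Fin N) (t : ℝ),
      deriv (fun s => ψ s i) t
        = ε * ∑ j : Fin N, A i j * (r t j / r t i) * Real.sin (ψ t j - ψ t i - φ) ∧
      deriv (fun s => r s i) t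
        = ε * ∑ j : Fin N, A i j * r t j * Real.cos (ψ t j - ψ t i - φ) := by
    intro i t
    set a := deriv (fun s => r s i) t with ha
    set b := deriv (fun s => ψ s i) t with hb
    have hra : HasDerivAt (fun s => r s i) a t := (hrdiff i t).hasDerivAt
    have hψa : HasDerivAt (fun s => ψ s i) b t := (hψdiff i t).hasDerivAt
    have hrC : HasDerivAt (fun s => (r s i : ℂ)) (a : ℂ) t := hra.ofReal_comp
    have hψC : HasDerivAt (fun s => (ψ s i : ℂ)) (b : ℂ) t := hψa.ofReal_comp
    have hexp : HasDerivAt (fun s => Complex.exp (Complex.I * (ψ s i : ℂ)))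
        (Complex.exp (Complex.I * (ψ t i : ℂ)) * (Complex.I * b)) t :=
      (hψC.const_mul Complex.I).cexp
    have hprod := hrC.mul hexp
    have h1 := (hx i t).unique hprod
    have hE : Complex.exp (Complex.I * (ψ t i : ℂ)) ≠ 0 := Complex.exp_ne_zero _
    have h2 : K.mulVec (fun j => (r t j : ℂ) * Complex.exp (Complex.I * (ψ t j : ℂ))) i
        = ∑ j : Fin N, ((ε : ℂ) * Complex.exp (-Complex.I * (φ : ℂ)) * (A i j : ℂ))
            * ((r t j : ℂ) * Complex.exp (Complex.I * (ψ t j : ℂ))) := by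
      simp [Matrix.mulVec, dotProduct, hK]
    have key : ((a : ℂ) + ((r t i * b : ℝ) : ℂ) * Complex.I)
        = ∑ j : Fin N, ((ε * A i j * r t j : ℝ) : ℂ)
            * Complex.exp (((ψ t j - ψ t i - φ : ℝ) : ℂ) * Complex.I) := by
      apply mul_right_cancel₀ hE
      rw [Finset.sum_mul]
      have hterm : ∀ j : Fin N,
          ((ε * A i j * r t j : ℝ) : ℂ)
              * Complex.exp (((ψ t j - ψ t i - φ : ℝ) : ℂ) * Complex.I)
              * Complex.exp (Complex.I * (ψ t i : ℂ))
          = ((ε : ℂ) * Complex.exp (-Complex.I * (φ : ℂ)) * (A i j : ℂ))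
              * ((r t j : ℂ) * Complex.exp (Complex.I * (ψ t j : ℂ))) := by
        intro j
        rw [mul_assoc, ← Complex.exp_add]
        push_cast
        rw [show ((ψ t j : ℂ) - (ψ t i : ℂ) - (φ : ℂ)) * Complex.I
              + Complex.I * (ψ t i : ℂ)
            = -Complex.I * (φ : ℂ) + Complex.I * (ψ t j : ℂ) by ring,
          Complex.exp_add]
        ring
      rw [Finset.sum_congr rfl (fun j _ => hterm j), ← h2, h1]
      push_cast
      ring
    have hre := congrArg Complex.re key
    have him := congrArg Complex.im key
    simp only [Complex.add_re, Complex.ofReal_re, Complex.mul_re, Complex.I_re,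
      Complex.I_im, Complex.ofReal_im, Complex.re_sum, Complex.im_sum,
      Complex.add_im, Complex.mul_im, mul_zero, mul_one, zero_mul, sub_zero,
      add_zero, zero_add, zero_sub, neg_zero, Complex.exp_ofReal_mul_I_re,
      Complex.exp_ofReal_mul_I_im] at hre him
    have hri : r t i ≠ 0 := (hrpos i t).ne'
    constructor
    · have hsum : ε * ∑ j : Fin N, A i j * (r t j / r t i) * Real.sin (ψ t j - ψ t i - φ)
          = (r t i)⁻¹ * ∑ j : Fin N, ε * A i j * r t j * Real.sin (ψ t j - ψ t i - φ) := by
        rw [Finset.mul_sum, Finset.mul_sum]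
        refine Finset.sum_congr rfl fun j _ => ?_
        field_simp
      rw [hsum, ← him, inv_mul_cancel_left₀ hri]
    · rw [hre, Finset.mul_sum]
      exact Finset.sum_congr rfl fun j _ => by ring
  refine ⟨fun i t => ?_, fun i t => ?_⟩
  · exact (main i t).1 ▸ (hψdiff i t).hasDerivAt
  · exact (main i t).2 ▸ (hrdiff i t).hasDerivAt
end

section
/- Let N ≥ 1, ε > 0, K = ε·(J − I) with J the N×N all-ones complex matrix, and let x₀ ∈ ℂ^N with mean c = (1/N)∑_j (x₀)_j. Let x(t) = exp(tK)·x₀. Then for every index i, e^{−ε(N−1)t} · x_i(t) → c as t → +∞. In particular, if c ≠ 0, then for all indices i, j the ratio x_i(t)/x_j(t) → 1 as t → +∞ (the phases Arg x_i(t) − Arg x_j(t) converge to 0): the network phase-synchronizes. -/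
open NormedSpace Filter

lemma exp_mulVec_eigen {n : ℕ} (M : Matrix (Fin n) (Fin n) ℂ) (v : Fin n → ℂ) (μ : ℂ)
    (h : M.mulVec v = μ • v) :
    (exp M).mulVec v = Complex.exp μ • v := by
  letI : SeminormedRing (Matrix (Fin n) (Fin n) ℂ) := Matrix.linftyOpSemiNormedRing
  letI : NormedRing (Matrix (Fin n) (Fin n) ℂ) := Matrix.linftyOpNormedRing
  letI : NormedAlgebra ℂ (Matrix (Fin n) (Fin n) ℂ) := Matrix.linftyOpNormedAlgebra
  have hpow : ∀ k : ℕ, (M ^ k).mulVec v = μ ^ k • v := by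
    intro k
    induction k with
    | zero => simp [Matrix.one_mulVec]
    | succ k ih =>
        rw [pow_succ', ← Matrix.mulVec_mulVec, ih, Matrix.mulVec_smul, h,
          pow_succ', mul_smul, smul_comm]
  let L : Matrix (Fin n) (Fin n) ℂ →ₗ[ℂ] (Fin n → ℂ) :=
    { toFun := fun A => A.mulVec v
      map_add' := fun A B => Matrix.add_mulVec A B v
      map_smul' := fun r A => Matrix.smul_mulVec r A v }
  have hL : Continuous L := L.continuous_of_finiteDimensional
  have hsum : Summable (fun k : ℕ => (k.factorial : ℂ)⁻¹ • M ^ k) :=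
    expSeries_summable' (𝕂 := ℂ) M
  have key : L (exp M) = ∑' k : ℕ, L ((k.factorial : ℂ)⁻¹ • M ^ k) := by
    rw [exp_eq_tsum ℂ]
    exact (ContinuousLinearMap.mk L hL).map_tsum hsum
  have : (exp M).mulVec v = ∑' k : ℕ, (k.factorial : ℂ)⁻¹ • μ ^ k • v := by
    simpa [L, hpow] using key
  rw [this]
  have hμ : Complex.exp μ = ∑' k : ℕ, (k.factorial : ℂ)⁻¹ • μ ^ k := by
    rw [Complex.exp_eq_exp_ℂ, exp_eq_tsum ℂ]
  rw [hμ, ← Summable.tsum_smul_const]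
  · simp [mul_smul]
  · exact expSeries_summable' (𝕂 := ℂ) μ

open NormedSpace Filter in
/-- Complete graph, attractive coupling: with `K = ε (J − I)`, `ε > 0`, and
`x(t) = exp(tK) x₀`, we have `e^{−ε(N−1)t} x_i(t) → c` (the mean of `x₀`) for every `i`;
and if `c ≠ 0` then `x_i(t)/x_j(t) → 1` for all `i, j`: the network phase-synchronizes. -/
theorem complete_graph_phase_synchronization
    (N : ℕ) (hN : 1 ≤ N) (ε : ℝ) (hε : 0 < ε)
    (J : Matrix (Fin N) (Fin N) ℂ) (hJ : ∀ i j, J i j = 1)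
    (K : Matrix (Fin N) (Fin N) ℂ) (hK : K = (ε : ℂ) • (J - 1))
    (x₀ : Fin N → ℂ) (c : ℂ) (hc : c = (1 / (N : ℂ)) * ∑ j : Fin N, x₀ j)
    (x : ℝ → Fin N → ℂ) (hx : ∀ t, x t = (exp (t • K)).mulVec x₀) :
    (∀ i : Fin N,
      Tendsto (fun t : ℝ => Complex.exp (-(ε * ((N : ℝ) - 1) * t) : ℂ) * x t i)
        atTop (nhds c)) ∧
    (c ≠ 0 → ∀ i j : Fin N,
      Tendsto (fun t : ℝ => x t i / x t j) atTop (nhds 1)) := by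
  have hN0 : (N : ℂ) ≠ 0 := by
    exact_mod_cast Nat.cast_ne_zero.mpr (Nat.one_le_iff_ne_zero.mp hN)
  set ones : Fin N → ℂ := fun _ => 1 with hones_def
  set y : Fin N → ℂ := fun j => x₀ j - c with hy_def
  have hsum_y : ∑ j : Fin N, y j = 0 := by
    simp only [hy_def, Finset.sum_sub_distrib, Finset.sum_const, Finset.card_univ,
      Fintype.card_fin, nsmul_eq_mul]
    rw [hc]
    field_simp
    ring
  have hsplit : x₀ = c • ones + y := by
    funext j; simp [hy_def, hones_def]
  -- eigenvector computations
  have hJones : J.mulVec ones = (N : ℂ) • ones := by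
    funext i
    simp [Matrix.mulVec, dotProduct, hJ, hones_def]
  have hJy : J.mulVec y = 0 := by
    funext i
    simp [Matrix.mulVec, dotProduct, hJ, hsum_y]
  have hKones : K.mulVec ones = ((ε : ℂ) * ((N : ℂ) - 1)) • ones := by
    rw [hK, Matrix.smul_mulVec, Matrix.sub_mulVec, hJones, Matrix.one_mulVec]
    funext i
    simp [hones_def, smul_eq_mul]
  have hKy : K.mulVec y = (-(ε : ℂ)) • y := by
    rw [hK, Matrix.smul_mulVec, Matrix.sub_mulVec, hJy, Matrix.one_mulVec]
    funext i
    simp [smul_eq_mul]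
  have htK : ∀ t : ℝ, t • K = ((t : ℂ)) • K := by
    intro t
    ext i j
    simp [Matrix.smul_apply, Complex.real_smul]
  have hxf : ∀ t : ℝ, x t = fun i =>
      Complex.exp ((t : ℂ) * ((ε : ℂ) * ((N : ℂ) - 1))) * c
        + Complex.exp ((t : ℂ) * (-(ε : ℂ))) * y i := by
    intro t
    have e1 : (exp (t • K)).mulVec ones
        = Complex.exp ((t : ℂ) * ((ε : ℂ) * ((N : ℂ) - 1))) • ones := by
      rw [htK]
      exact exp_mulVec_eigen _ _ _ (by rw [Matrix.smul_mulVec, hKones, smul_smul])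
    have e2 : (exp (t • K)).mulVec y
        = Complex.exp ((t : ℂ) * (-(ε : ℂ))) • y := by
      rw [htK]
      exact exp_mulVec_eigen _ _ _ (by rw [Matrix.smul_mulVec, hKy, smul_smul])
    rw [hx t, hsplit]
    funext i
    rw [Matrix.mulVec_add, Matrix.mulVec_smul, e1, e2]
    simp [hones_def, mul_comm]
  -- part 1
  have hpos : (0 : ℝ) < ε * N := by positivity
  have hexp0 : Tendsto (fun t : ℝ => Complex.exp (-(ε * N * t) : ℂ)) atTop (nhds 0) := by
    rw [tendsto_zero_iff_norm_tendsto_zero]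
    have : ∀ t : ℝ, ‖Complex.exp (-(ε * N * t) : ℂ)‖ = Real.exp (-(ε * N * t)) := by
      intro t
      rw [Complex.norm_exp]
      norm_num
    simp only [this]
    refine Real.tendsto_exp_atBot.comp ?_
    exact tendsto_neg_atTop_atBot.comp (Tendsto.const_mul_atTop hpos tendsto_id)
  have part1 : ∀ i : Fin N,
      Tendsto (fun t : ℝ => Complex.exp (-(ε * ((N : ℝ) - 1) * t) : ℂ) * x t i)
        atTop (nhds c) := by
    intro i
    have heq : ∀ t : ℝ, Complex.exp (-(ε * ((N : ℝ) - 1) * t) : ℂ) * x t i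
        = c + Complex.exp (-(ε * N * t) : ℂ) * y i := by
      intro t
      rw [hxf t]
      have e3 : Complex.exp (-(ε * ((N : ℝ) - 1) * t) : ℂ)
          * Complex.exp ((t : ℂ) * ((ε : ℂ) * ((N : ℂ) - 1))) = 1 := by
        rw [← Complex.exp_add, show (1 : ℂ) = Complex.exp 0 from Complex.exp_zero.symm]
        congr 1
        push_cast
        ring
      have e4 : Complex.exp (-(ε * ((N : ℝ) - 1) * t) : ℂ)
          * Complex.exp ((t : ℂ) * (-(ε : ℂ)))
          = Complex.exp (-(ε * N * t) : ℂ) := by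
        rw [← Complex.exp_add]
        congr 1
        push_cast
        ring
      linear_combination c * e3 + y i * e4
    simp only [heq]
    have := (hexp0.mul_const (y i)).const_add c
    simpa using this
  refine ⟨part1, fun hc0 i j => ?_⟩
  have := (part1 i).div (part1 j) hc0
  rw [div_self hc0] at this
  refine this.congr fun t => ?_
  exact mul_div_mul_left _ _ (Complex.exp_ne_zero _)
end
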